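/- Let G be a tdlc group and (π, H) a continuous unitary representation of G on a Hilbert space. Then π is topologically irreducible (has no proper nonzero closed invariant subspace) if and only if for every compact open subgroup K with H^K ≠ 0, the representation of the Hecke algebra H_K(G) on H^K is topologically irreducible. -/

import Mathlib

open scoped ComplexInnerProductSpace

/-- A (strongly continuous) unitary representation of a topological group `G`
on a complex Hilbert space. -/
structure UnitaryRep (G : Type*) [Group G] [TopologicalSpace G] where
  /-- the underlying Hilbert space -/
  carrier : Type
  [nacg : NormedAddCommGroup carrier]
  [ips : InnerProductSpace ℂ carrier]
  [cs : CompleteSpace carrier]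
  /-- the action by unitary operators -/
  ρ : G → carrier ≃ₗᵢ[ℂ] carrier
  map_one' : ∀ w : carrier, ρ 1 w = w
  map_mul' : ∀ (g h : G) (w : carrier), ρ (g * h) w = ρ g (ρ h w)
  continuous_orbit : ∀ w : carrier, Continuous fun g => ρ g w

attribute [instance] UnitaryRep.nacg UnitaryRep.ips UnitaryRep.cs

open MeasureTheory

namespace UnitaryRep

variable {G : Type*} [Group G] [TopologicalSpace G]

/-- The matrix coefficient `g ↦ ⟪π(g)u, v⟫` of a unitary representation. -/
noncomputable def mc (π : UnitaryRep G) (u v : π.carrier) : G → ℂ := fun g => ⟪π.ρ g u, v⟫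

/-- Weak containment `π' ≺ π`: every matrix coefficient of `π'` is approximated,
uniformly on compact sets, by finite sums of matrix coefficients of `π`. -/
def WeakContained (π' π : UnitaryRep G) : Prop :=
  ∀ (u v : π'.carrier) (C : Set G), IsCompact C → ∀ ε > (0 : ℝ),
    ∃ (n : ℕ) (a b : Fin n → π.carrier),
      ∀ g ∈ C, ‖π'.mc u v g - ∑ i, π.mc (a i) (b i) g‖ ≤ ε

/-- Weak containment of a representation in a set of representations. -/
def WeakContainedIn (π' : UnitaryRep G) (S : Set (UnitaryRep G)) : Prop :=
  ∀ (u v : π'.carrier) (C : Set G), IsCompact C → ∀ ε > (0 : ℝ),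
    ∃ (n : ℕ) (σ : Fin n → UnitaryRep G), (∀ i, σ i ∈ S) ∧
      ∃ (a : (i : Fin n) → (σ i).carrier) (b : (i : Fin n) → (σ i).carrier),
        ∀ g ∈ C, ‖π'.mc u v g - ∑ i, (σ i).mc (a i) (b i) g‖ ≤ ε

/-- Topological irreducibility (together with nontriviality). -/
def IsIrreducible (π : UnitaryRep G) : Prop :=
  (∃ w : π.carrier, w ≠ 0) ∧
    ∀ W : Submodule ℂ π.carrier, IsClosed (W : Set π.carrier) →
      (∀ g, ∀ w ∈ W, π.ρ g w ∈ W) → W = ⊥ ∨ W = ⊤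

/-- The support of a unitary representation: all irreducible representations
weakly contained in it. -/
def supp (π : UnitaryRep G) : Set (UnitaryRep G) :=
  {σ | σ.IsIrreducible ∧ σ.WeakContained π}

/-- A set of irreducible representations is Fell-closed if it contains every
irreducible representation weakly contained in it. -/
def FellClosed (S : Set (UnitaryRep G)) : Prop :=
  ∀ σ : UnitaryRep G, σ.IsIrreducible → σ.WeakContainedIn S → σ ∈ S

/-- The trivial (one-dimensional) representation. -/
noncomputable def trivialRep (G : Type*) [Group G] [TopologicalSpace G] : UnitaryRep G where
  carrier := ℂ
  ρ _ := LinearIsometryEquiv.refl ℂ ℂ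
  map_one' _ := rfl
  map_mul' _ _ _ := rfl
  continuous_orbit _ := continuous_const

/-- `τ` is a realization of the Hilbertian tensor product `π₁ ⊗ π₂`. -/
def IsTensorRep (π₁ π₂ τ : UnitaryRep G) : Prop :=
  ∃ t : π₁.carrier → π₂.carrier → τ.carrier,
    (∀ u v u' v', ⟪t u v, t u' v'⟫ = ⟪u, u'⟫ * ⟪v, v'⟫) ∧
    (∀ g u v, τ.ρ g (t u v) = t (π₁.ρ g u) (π₂.ρ g v)) ∧
    Dense (Submodule.span ℂ {w : τ.carrier | ∃ u v, w = t u v} : Set τ.carrier)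

/-- Unitary equivalence of representations. -/
def UnitaryEquiv (π σ : UnitaryRep G) : Prop :=
  ∃ e : π.carrier ≃ₗᵢ[ℂ] σ.carrier, ∀ g w, e (π.ρ g w) = σ.ρ g (e w)

/-- `πb` is a realization of the conjugate (contragredient) representation of `π`. -/
def IsConjugateRep (π πb : UnitaryRep G) : Prop :=
  ∃ c : π.carrier → πb.carrier, Function.Bijective c ∧
    (∀ u v, c (u + v) = c u + c v) ∧
    (∀ (a : ℂ) (u : π.carrier), c (a • u) = (starRingEnd ℂ) a • c u) ∧
    (∀ u v, ⟪c u, c v⟫ = (starRingEnd ℂ) ⟪u, v⟫) ∧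
    (∀ g u, πb.ρ g (c u) = c (π.ρ g u))

/-- Restriction of a representation to a subgroup. -/
noncomputable def res (π : UnitaryRep G) (Γ : Subgroup G) : UnitaryRep Γ where
  carrier := π.carrier
  ρ γ := π.ρ γ
  map_one' w := π.map_one' w
  map_mul' g h w := π.map_mul' g h w
  continuous_orbit w := (π.continuous_orbit w).comp continuous_subtype_val

/-- Membership in `Ĝ_p`: an irreducible representation with a dense subspace of
vectors whose matrix coefficients lie in `L^{p+ε}(G)` for every `ε > 0`. -/
def MemGhat [MeasurableSpace G] (π : UnitaryRep G) (p : ℝ) (μ : Measure G) : Prop :=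
  π.IsIrreducible ∧
    ∃ H₀ : Submodule ℂ π.carrier, Dense (H₀ : Set π.carrier) ∧
      ∀ u ∈ H₀, ∀ v ∈ H₀, ∀ ε > (0 : ℝ),
        MemLp (π.mc u v) (ENNReal.ofReal (p + ε)) μ

end UnitaryRep


/-- The Hecke algebra `H_K(G)` of compactly supported `K`-bi-invariant functions,
as a set of functions. -/
def heckeSet {G : Type*} [Group G] [TopologicalSpace G] (K : Subgroup G) : Set (G → ℂ) :=
  {f | HasCompactSupport f ∧ ∀ k₁ ∈ K, ∀ k₂ ∈ K, ∀ g : G, f (k₁ * g * k₂) = f g}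

/-- The submodule of `K`-invariant vectors of a unitary representation. -/
def fixedSubU {G : Type*} [Group G] [TopologicalSpace G] (π : UnitaryRep G)
    (K : Subgroup G) : Submodule ℂ π.carrier where
  carrier := {v | ∀ k ∈ K, π.ρ k v = v}
  add_mem' := by
    intro a b ha hb k hk
    simp [map_add, ha k hk, hb k hk]
  zero_mem' := by
    intro k hk
    simp
  smul_mem' := by
    intro c v hv k hk
    simp [_root_.map_smul, hv k hk]

/-- The action of a compactly supported `K`-bi-invariant function on a `K`-invariant
vector of a unitary representation, as a finite sum over the cosets `G ⧸ K`. -/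
noncomputable def heckeActU {G : Type*} [Group G] [TopologicalSpace G]
    (π : UnitaryRep G) (K : Subgroup G) (f : G → ℂ) (v : π.carrier) : π.carrier :=
  ∑ᶠ c : G ⧸ K, f (Quotient.out c) • π.ρ (Quotient.out c) v

section Aux

open Function Set Topology Filter
open scoped Pointwise
set_option linter.unusedSectionVars false

variable {G : Type*} [Group G] [TopologicalSpace G] [IsTopologicalGroup G]

private lemma mem_fixed_iff {π : UnitaryRep G} {K : Subgroup G} {v : π.carrier} :
    v ∈ fixedSubU π K ↔ ∀ k ∈ K, π.ρ k v = v := Iff.rfl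

private lemma rho_rho_inv {π : UnitaryRep G} (g : G) (w : π.carrier) :
    π.ρ g (π.ρ g⁻¹ w) = w := by
  rw [← π.map_mul', mul_inv_cancel, π.map_one']

private lemma fixed_isClosed (π : UnitaryRep G) (K : Subgroup G) :
    IsClosed ((fixedSubU π K : Submodule ℂ π.carrier) : Set π.carrier) := by
  have h : ((fixedSubU π K : Submodule ℂ π.carrier) : Set π.carrier)
      = ⋂ (k : G) (_ : k ∈ K), {v : π.carrier | π.ρ k v = v} := by
    ext v
    simp only [Set.mem_iInter, Set.mem_setOf_eq, SetLike.mem_coe]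
    exact mem_fixed_iff
  rw [h]
  exact isClosed_iInter fun k => isClosed_iInter fun _ =>
    isClosed_eq (π.ρ k).continuous continuous_id

private lemma fixed_hasOrtho (π : UnitaryRep G) (K : Subgroup G) :
    Submodule.HasOrthogonalProjection (fixedSubU π K) := by
  haveI := (fixed_isClosed π K).completeSpace_coe
  infer_instance

private lemma inner_rho_fixed {π : UnitaryRep G} {K : Subgroup G} {k : G} (hk : k ∈ K)
    (x : π.carrier) {w : π.carrier} (hw : w ∈ fixedSubU π K) :
    ⟪π.ρ k x, w⟫ = ⟪x, w⟫ := by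
  rw [← (π.ρ k).inner_map_map x w, mem_fixed_iff.mp hw k hk]

private lemma finite_out_mem {K : Subgroup G} (hKo : IsOpen (K : Set G)) {S : Set G}
    (hS : IsCompact S) : {c : G ⧸ K | Quotient.out c ∈ S}.Finite := by
  have hcov : S ⊆ ⋃ c : G ⧸ K, Quotient.out c • (K : Set G) := by
    intro g _
    refine Set.mem_iUnion.mpr ⟨QuotientGroup.mk g, ?_⟩
    obtain ⟨k, hk⟩ := QuotientGroup.mk_out_eq_mul K g
    exact Set.mem_smul_set.mpr ⟨(k : G)⁻¹, K.inv_mem k.2,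
      by rw [smul_eq_mul, hk, mul_inv_cancel_right]⟩
  obtain ⟨t, ht⟩ := hS.elim_finite_subcover (fun c : G ⧸ K => Quotient.out c • (K : Set G))
    (fun c => hKo.smul _) hcov
  refine t.finite_toSet.subset fun c hc => ?_
  obtain ⟨c', hc't, hmem⟩ := Set.mem_iUnion₂.mp (ht hc)
  obtain ⟨k, hkK, hk⟩ := hmem
  have hmul : Quotient.out c' * k = Quotient.out c := by simpa using hk
  have hcc : c' = c :=
    calc c' = QuotientGroup.mk (Quotient.out c') := (QuotientGroup.out_eq' c').symm
      _ = QuotientGroup.mk (Quotient.out c' * k) :=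
          QuotientGroup.eq.mpr (by rw [inv_mul_cancel_left]; exact hkK)
      _ = QuotientGroup.mk (Quotient.out c) := by rw [hmul]
      _ = c := QuotientGroup.out_eq' c
  exact hcc ▸ hc't

private lemma support_fin (π : UnitaryRep G) {K : Subgroup G} (hKo : IsOpen (K : Set G))
    {f : G → ℂ} (hf : HasCompactSupport f) (v : π.carrier) :
    (Function.support fun c : G ⧸ K =>
      f (Quotient.out c) • π.ρ (Quotient.out c) v).Finite := by
  refine (finite_out_mem hKo hf).subset fun c hc => subset_tsupport f fun hz => hc ?_
  show f (Quotient.out c) • π.ρ (Quotient.out c) v = 0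
  rw [hz, zero_smul]

private lemma heckeActU_mem_of_invariant {π : UnitaryRep G} {K : Subgroup G}
    (hKo : IsOpen (K : Set G)) {W : Submodule ℂ π.carrier}
    (hinv : ∀ g : G, ∀ v ∈ W, π.ρ g v ∈ W) {f : G → ℂ} (hf : HasCompactSupport f)
    {v : π.carrier} (hv : v ∈ W) : heckeActU π K f v ∈ W := by
  rw [heckeActU, finsum_eq_sum _ (support_fin π hKo hf v)]
  exact W.sum_mem fun c _ => W.smul_mem _ (hinv _ _ hv)

private lemma heckeActU_mem_fixed {π : UnitaryRep G} {K : Subgroup G}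
    (hKo : IsOpen (K : Set G)) {f : G → ℂ} (hf : f ∈ heckeSet K) {v : π.carrier}
    (hv : v ∈ fixedSubU π K) : heckeActU π K f v ∈ fixedSubU π K := by
  intro k hk
  have hfin := support_fin π hKo hf.1 v
  have key : ∀ c : G ⧸ K,
      f (Quotient.out (k • c)) • π.ρ (Quotient.out (k • c)) v
        = π.ρ k (f (Quotient.out c) • π.ρ (Quotient.out c) v) := by
    intro c
    have hmk : QuotientGroup.mk (k * Quotient.out c) = k • c := by
      conv_rhs => rw [← QuotientGroup.out_eq' c]
      rw [MulAction.Quotient.smul_mk, smul_eq_mul]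
    have hκ : (k * Quotient.out c)⁻¹ * Quotient.out (k • c) ∈ K :=
      QuotientGroup.eq.mp (hmk.trans (QuotientGroup.out_eq' (k • c)).symm)
    set κ := (k * Quotient.out c)⁻¹ * Quotient.out (k • c) with hκdef
    have hout : Quotient.out (k • c) = k * Quotient.out c * κ := by
      rw [hκdef, mul_inv_cancel_left]
    have h1 : f (Quotient.out (k • c)) = f (Quotient.out c) := by
      rw [hout]; exact hf.2 k hk κ hκ (Quotient.out c)
    have h2 : π.ρ (Quotient.out (k • c)) v = π.ρ k (π.ρ (Quotient.out c) v) := by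
      rw [hout, π.map_mul', π.map_mul', mem_fixed_iff.mp hv κ hκ]
    rw [h1, h2, (π.ρ k).map_smul]
  show π.ρ k (heckeActU π K f v) = heckeActU π K f v
  calc π.ρ k (heckeActU π K f v)
      = ∑ᶠ c : G ⧸ K, π.ρ k (f (Quotient.out c) • π.ρ (Quotient.out c) v) :=
        (π.ρ k).toLinearEquiv.toLinearMap.toAddMonoidHom.map_finsum hfin
    _ = ∑ᶠ c : G ⧸ K, f (Quotient.out ((MulAction.toPerm k : Equiv.Perm (G ⧸ K)) c))
          • π.ρ (Quotient.out ((MulAction.toPerm k : Equiv.Perm (G ⧸ K)) c)) v :=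
        finsum_congr fun c => (key c).symm
    _ = ∑ᶠ c : G ⧸ K, f (Quotient.out c) • π.ρ (Quotient.out c) v :=
        finsum_comp_equiv (MulAction.toPerm k)
          (f := fun c : G ⧸ K => f (Quotient.out c) • π.ρ (Quotient.out c) v)
    _ = heckeActU π K f v := rfl

private def dblCoset (K : Subgroup G) (g : G) : Set G := (K : Set G) * {g} * (K : Set G)

private lemma mem_dblCoset {K : Subgroup G} {g x : G} :
    x ∈ dblCoset K g ↔ ∃ k₁ ∈ K, ∃ k₂ ∈ K, k₁ * g * k₂ = x := by
  simp only [dblCoset, Set.mem_mul, Set.mem_singleton_iff]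
  constructor
  · rintro ⟨y, ⟨k₁, hk₁, z, rfl, rfl⟩, k₂, hk₂, rfl⟩
    exact ⟨k₁, hk₁, k₂, hk₂, rfl⟩
  · rintro ⟨k₁, hk₁, k₂, hk₂, rfl⟩
    exact ⟨k₁ * g, ⟨k₁, hk₁, g, rfl, rfl⟩, k₂, hk₂, rfl⟩

private noncomputable def indK (K : Subgroup G) (g : G) : G → ℂ :=
  (dblCoset K g).indicator fun _ => (1 : ℂ)

private lemma indK_mem_heckeSet [T2Space G] {K : Subgroup G} (hKc : IsCompact (K : Set G))
    (g : G) : indK K g ∈ heckeSet K := by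
  have hD : IsCompact (dblCoset K g) := (hKc.mul isCompact_singleton).mul hKc
  constructor
  · refine IsCompact.of_isClosed_subset hD (isClosed_tsupport _)
      (closure_minimal ?_ hD.isClosed)
    intro x hx
    by_contra hxD
    exact hx (Set.indicator_of_notMem hxD _)
  · intro k₁ hk₁ k₂ hk₂ x
    have hiff : k₁ * x * k₂ ∈ dblCoset K g ↔ x ∈ dblCoset K g := by
      rw [mem_dblCoset, mem_dblCoset]
      constructor
      · rintro ⟨a, ha, b, hb, hab⟩
        refine ⟨k₁⁻¹ * a, K.mul_mem (K.inv_mem hk₁) ha, b * k₂⁻¹,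
          K.mul_mem hb (K.inv_mem hk₂), ?_⟩
        have hx : x = k₁⁻¹ * (a * g * b) * k₂⁻¹ := by
          rw [hab]; group
        rw [hx]; group
      · rintro ⟨a, ha, b, hb, rfl⟩
        exact ⟨k₁ * a, K.mul_mem hk₁ ha, b * k₂, K.mul_mem hb hk₂, by group⟩
    by_cases hx : x ∈ dblCoset K g
    · rw [indK, Set.indicator_of_mem hx, Set.indicator_of_mem (hiff.mpr hx)]
    · rw [indK, Set.indicator_of_notMem hx,
        Set.indicator_of_notMem (fun h => hx (hiff.mp h))]

private lemma heckeActU_indK {π : UnitaryRep G} {K : Subgroup G} [T2Space G]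
    (hKo : IsOpen (K : Set G)) (hKc : IsCompact (K : Set G))
    {v : π.carrier} (hv : v ∈ fixedSubU π K) (g : G) :
    ∃ n : ℕ, 0 < n ∧ ∃ m : π.carrier, m ∈ fixedSubU π K ∧
      heckeActU π K (indK K g) v = (n : ℂ) • m ∧
      ∀ w ∈ fixedSubU π K, ⟪π.ρ g v - m, w⟫ = 0 := by
  have hD : IsCompact (dblCoset K g) := (hKc.mul isCompact_singleton).mul hKc
  have hT : {c : G ⧸ K | Quotient.out c ∈ dblCoset K g}.Finite := finite_out_mem hKo hD
  set t := hT.toFinset with ht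
  have hmemt : ∀ c : G ⧸ K, c ∈ t ↔ Quotient.out c ∈ dblCoset K g := fun c =>
    hT.mem_toFinset
  have hsum : heckeActU π K (indK K g) v = ∑ c ∈ t, π.ρ (Quotient.out c) v := by
    rw [heckeActU, finsum_eq_finset_sum_of_support_subset _ (s := t) ?_]
    · refine Finset.sum_congr rfl fun c hc => ?_
      rw [show indK K g (Quotient.out c) = 1 from
        Set.indicator_of_mem ((hmemt c).mp hc) _, one_smul]
    · intro c hc
      have : indK K g (Quotient.out c) ≠ 0 := by
        intro h0
        exact hc (by show indK K g (Quotient.out c) • _ = 0; rw [h0, zero_smul])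
      refine (hmemt c).mpr ?_
      by_contra hnot
      exact this (Set.indicator_of_notMem hnot _)
  have hne : (QuotientGroup.mk g : G ⧸ K) ∈ t := by
    refine (hmemt _).mpr ?_
    obtain ⟨k, hk⟩ := QuotientGroup.mk_out_eq_mul K g
    rw [hk]
    exact mem_dblCoset.mpr ⟨1, K.one_mem, k, k.2, by group⟩
  have hpos : 0 < t.card := Finset.card_pos.mpr ⟨_, hne⟩
  have hn0 : ((t.card : ℂ)) ≠ 0 := Nat.cast_ne_zero.mpr hpos.ne'
  have hSfix : heckeActU π K (indK K g) v ∈ fixedSubU π K :=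
    heckeActU_mem_fixed hKo (indK_mem_heckeSet hKc g) hv
  refine ⟨t.card, hpos, (t.card : ℂ)⁻¹ • heckeActU π K (indK K g) v,
    (fixedSubU π K).smul_mem _ hSfix, by rw [smul_smul, mul_inv_cancel₀ hn0, one_smul], ?_⟩
  intro w hw
  have hinner : ⟪heckeActU π K (indK K g) v, w⟫ = (t.card : ℂ) * ⟪π.ρ g v, w⟫ := by
    rw [hsum, sum_inner]
    have : ∀ c ∈ t, ⟪π.ρ (Quotient.out c) v, w⟫ = ⟪π.ρ g v, w⟫ := by
      intro c hc
      obtain ⟨k₁, hk₁, k₂, hk₂, heq⟩ := mem_dblCoset.mp ((hmemt c).mp hc)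
      rw [← heq, π.map_mul', π.map_mul', mem_fixed_iff.mp hv k₂ hk₂,
        inner_rho_fixed hk₁ _ hw]
    rw [Finset.sum_congr rfl this, Finset.sum_const, nsmul_eq_mul]
  rw [inner_sub_left, inner_smul_left, hinner, map_inv₀, map_natCast,
    inv_mul_cancel_left₀ hn0, sub_self]

private lemma exists_unique_min_norm {E : Type*} [NormedAddCommGroup E]
    [InnerProductSpace ℝ E] (C : Set E) (hne : C.Nonempty) (hcomp : IsComplete C)
    (hconv : Convex ℝ C) :
    ∃ m ∈ C, (∀ x ∈ C, ‖m‖ ≤ ‖x‖) ∧ (∀ x ∈ C, ‖x‖ = ‖m‖ → x = m) := by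
  obtain ⟨m, hmC, hmd⟩ := exists_norm_eq_iInf_of_complete_convex hne hcomp hconv 0
  have hbdd : BddBelow (Set.range fun w : C => ‖(0 : E) - w‖) := by
    refine ⟨0, ?_⟩
    rintro _ ⟨w, rfl⟩
    positivity
  have hle : ∀ x ∈ C, ‖m‖ ≤ ‖x‖ := by
    intro x hx
    have := ciInf_le hbdd (⟨x, hx⟩ : C)
    rw [← hmd] at this
    simpa using this
  refine ⟨m, hmC, hle, ?_⟩
  intro x hx hxm
  have hq : (1/2 : ℝ) • m + (1/2 : ℝ) • x ∈ C :=
    hconv hmC hx (by norm_num) (by norm_num) (by norm_num)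
  have hdq : ‖m‖ ≤ ‖(1/2 : ℝ) • m + (1/2 : ℝ) • x‖ := hle _ hq
  have hsmul : (1/2 : ℝ) • m + (1/2 : ℝ) • x = (1/2 : ℝ) • (m + x) := by
    rw [smul_add]
  have hnorm : ‖(1/2 : ℝ) • (m + x)‖ = (1/2 : ℝ) * ‖m + x‖ := by
    rw [norm_smul]; norm_num
  have h2d : 2 * ‖m‖ ≤ ‖m + x‖ := by
    rw [hsmul, hnorm] at hdq; linarith
  have hpar := parallelogram_law_with_norm ℝ m x
  have hmx : ‖m - x‖ * ‖m - x‖ ≤ 0 := by nlinarith [norm_nonneg m, norm_nonneg (m + x)]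
  have : ‖m - x‖ = 0 := le_antisymm (by nlinarith [norm_nonneg (m - x)]) (norm_nonneg _)
  have := norm_eq_zero.mp this
  rw [sub_eq_zero] at this
  exact this.symm

private lemma exists_fixed_vector {π : UnitaryRep G} {K : Subgroup G}
    {v : π.carrier} (hv : v ≠ 0)
    (hsmall : ∀ k : G, k ∈ K → ‖π.ρ k v - v‖ ≤ ‖v‖ / 2) :
    ∃ m : π.carrier, m ∈ fixedSubU π K ∧ m ≠ 0 ∧
      ∀ W : Submodule ℂ π.carrier, IsClosed (W : Set π.carrier) →
        (∀ g : G, ∀ x ∈ W, π.ρ g x ∈ W) → v ∈ W → m ∈ W := by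
  letI : InnerProductSpace ℝ π.carrier := InnerProductSpace.complexToReal
  set O : Set π.carrier := Set.range fun k : K => π.ρ (k : G) v with hO
  set C : Set π.carrier := closure (convexHull ℝ O) with hC
  have hvO : v ∈ O := ⟨⟨1, K.one_mem⟩, by exact π.map_one' v⟩
  have hne : C.Nonempty := ⟨v, subset_closure (subset_convexHull ℝ O hvO)⟩
  have hconv : Convex ℝ C := (convex_convexHull ℝ O).closure
  have hcomp : IsComplete C := isClosed_closure.isComplete
  obtain ⟨m, hmC, hmin, huniq⟩ := exists_unique_min_norm C hne hcomp hconv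
  have hCk : ∀ k : G, k ∈ K → ∀ x ∈ C, π.ρ k x ∈ C := by
    intro k hk x hx
    have himO : π.ρ k '' O ⊆ O := by
      rintro _ ⟨_, ⟨⟨k', hk'⟩, rfl⟩, rfl⟩
      exact ⟨⟨k * k', K.mul_mem hk hk'⟩, by exact π.map_mul' k k' v⟩
    have himage : π.ρ k '' convexHull ℝ O ⊆ convexHull ℝ O := by
      have heq : π.ρ k '' convexHull ℝ O
          = convexHull ℝ (π.ρ k '' O) :=
        ((π.ρ k).toLinearEquiv.toLinearMap.restrictScalars ℝ).image_convexHull O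
      rw [heq]
      exact convexHull_mono himO
    have h1 : π.ρ k x ∈ closure (π.ρ k '' convexHull ℝ O) :=
      image_closure_subset_closure_image (π.ρ k).continuous ⟨x, hx, rfl⟩
    exact closure_mono himage h1
  have hfix : m ∈ fixedSubU π K := by
    intro k hk
    exact huniq _ (hCk k hk m hmC) ((π.ρ k).norm_map m)
  have hCb : C ⊆ Metric.closedBall v (‖v‖ / 2) := by
    refine closure_minimal (convexHull_min ?_ (convex_closedBall v (‖v‖ / 2)))
      Metric.isClosed_closedBall
    rintro _ ⟨⟨k, hk⟩, rfl⟩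
    rw [Metric.mem_closedBall, dist_eq_norm]
    exact hsmall k hk
  have hm0 : m ≠ 0 := by
    intro h0
    have := hCb hmC
    rw [Metric.mem_closedBall, dist_eq_norm, h0, zero_sub, norm_neg] at this
    have hvpos : 0 < ‖v‖ := norm_pos_iff.mpr hv
    linarith
  refine ⟨m, hfix, hm0, ?_⟩
  intro W hWcl hWinv hvW
  have hOW : O ⊆ (W : Set π.carrier) := by
    rintro _ ⟨⟨k, hk⟩, rfl⟩
    exact hWinv k v hvW
  have hWconv : Convex ℝ (W : Set π.carrier) := by
    intro x hx y hy a b _ _ _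
    exact W.add_mem (W.smul_mem (algebraMap ℝ ℂ a) hx) (W.smul_mem (algebraMap ℝ ℂ b) hy)
  exact closure_minimal (convexHull_min hOW hWconv) hWcl hmC

private lemma t2_of_tdisc [TotallyDisconnectedSpace G] : T2Space G := by
  have h1 : IsClosed ({1} : Set G) := by
    have h := totallyDisconnectedSpace_iff_connectedComponent_singleton.mp
      (inferInstance : TotallyDisconnectedSpace G) (1 : G)
    rw [← h]
    exact isClosed_connectedComponent
  exact IsTopologicalGroup.t2Space_iff_one_closed.mpr h1

open scoped Pointwise in
private lemma exists_compact_open_subgroup [T2Space G] [LocallyCompactSpace G]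
    [TotallyDisconnectedSpace G] {U : Set G} (hU : IsOpen U) (h1U : (1 : G) ∈ U) :
    ∃ K : Subgroup G, IsOpen (K : Set G) ∧ IsCompact (K : Set G) ∧ (K : Set G) ⊆ U := by
  obtain ⟨s, hscomp, h1s, hsU⟩ := exists_compact_subset hU h1U
  obtain ⟨V, hVclopen, h1V, hVs⟩ :=
    loc_compact_Haus_tot_disc_of_zero_dim.mem_nhds_iff.mp
      (isOpen_interior.mem_nhds h1s)
  have hVcomp : IsCompact V := hscomp.of_isClosed_subset hVclopen.isClosed
    (hVs.trans interior_subset)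
  -- find T ∈ 𝓝 1 with V * T ⊆ V
  have hmulT : ∃ T ∈ 𝓝 (1 : G), V * T ⊆ V := by
    apply hVcomp.induction_on (p := fun S => ∃ T ∈ 𝓝 (1 : G), S * T ⊆ V)
      ⟨Set.univ, Filter.univ_mem, by simp only [Set.empty_mul, Set.empty_subset]⟩
      (fun _ _ huv ⟨T, hT, hmem⟩ => ⟨T, hT, (Set.mul_subset_mul_right huv).trans hmem⟩)
      (fun U' V' ⟨T₁, hT₁, h1⟩ ⟨T₂, hT₂, h2⟩ => ⟨T₁ ∩ T₂, Filter.inter_mem hT₁ hT₂, by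
        rw [Set.union_mul]
        exact Set.union_subset
          ((Set.mul_subset_mul_left Set.inter_subset_left).trans h1)
          ((Set.mul_subset_mul_left Set.inter_subset_right).trans h2)⟩)
    intro x memW
    have hx : (x, 1) ∈ (fun p : G × G => p.1 * p.2) ⁻¹' V := by simp [memW]
    rcases isOpen_prod_iff.mp (continuous_mul.isOpen_preimage V hVclopen.2) x 1 hx with
      ⟨U', V', Uopen, Vopen, xmemU, onememV, prodsub⟩
    have h6 : U' * V' ⊆ V :=
      Set.mul_subset_iff.mpr fun _ hx' _ hy => prodsub (Set.mk_mem_prod hx' hy)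
    exact ⟨U' ∩ V, ⟨U', Uopen.mem_nhds xmemU, V, fun _ a => a, rfl⟩,
      V', Vopen.mem_nhds onememV, fun _ a => h6 ((Set.mul_subset_mul_right
        Set.inter_subset_left) a)⟩
  obtain ⟨T, hTnhds, hTmul⟩ := hmulT
  rcases mem_nhds_iff.mp hTnhds with ⟨U', hU'T, hU'open, h1U'⟩
  set Q : Set G := U' ∩ U'⁻¹ with hQ
  have hQnhd : (1 : G) ∈ Q := ⟨h1U', by simpa using h1U'⟩
  have hQinv : Q⁻¹ = Q := by simp [hQ, Set.inter_comm]
  have hQopen : IsOpen Q := hU'open.inter hU'open.inv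
  have hQmul : V * Q ⊆ V :=
    (Set.mul_subset_mul_left (Set.inter_subset_left.trans hU'T)).trans hTmul
  let S : Subgroup G :=
  { carrier := ⋃ n : ℕ, Q ^ (n + 1)
    mul_mem' := fun {a b} ha hb => by
      rcases Set.mem_iUnion.mp ha with ⟨k, hk⟩
      rcases Set.mem_iUnion.mp hb with ⟨l, hl⟩
      apply Set.mem_iUnion.mpr
      exact ⟨k + 1 + l, by rw [add_assoc, pow_add]; exact Set.mul_mem_mul hk hl⟩
    one_mem' := Set.mem_iUnion.mpr ⟨0, by simpa using hQnhd⟩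
    inv_mem' := fun {a} ha => by
      rcases Set.mem_iUnion.mp ha with ⟨k, hk⟩
      apply Set.mem_iUnion.mpr
      refine ⟨k, ?_⟩
      rw [← hQinv]
      simpa only [inv_pow, Set.mem_inv, inv_inv] using hk }
  have hSopen : IsOpen ((S : Subgroup G) : Set G) := by
    refine isOpen_iUnion fun n => ?_
    rw [pow_succ]
    exact hQopen.mul_left
  have hSsubV : ((S : Subgroup G) : Set G) ⊆ V := by
    have mulQpow : ∀ n : ℕ, V * Q ^ (n + 1) ⊆ V := by
      intro n
      induction n with
      | zero => simpa using hQmul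
      | succ n ih =>
        rw [pow_succ, ← mul_assoc]
        exact (Set.mul_subset_mul_right ih).trans hQmul
    have hsub : ∀ n : ℕ, Q ^ (n + 1) ⊆ V * Q ^ (n + 1) := fun n x hx =>
      Set.mem_mul.mpr ⟨1, h1V, x, hx, one_mul x⟩
    exact Set.iUnion_subset fun n x hx => mulQpow n (hsub n hx)
  exact ⟨S, hSopen, hVcomp.of_isClosed_subset (S.isClosed_of_isOpen hSopen) hSsubV,
    hSsubV.trans (hVs.trans (interior_subset.trans hsU))⟩

end Aux

/-- A continuous unitary representation of a tdlc group is
topologically irreducible iff for every compact open subgroup `K` with `H^K ≠ 0`,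
the `H_K(G)`-representation on `H^K` is topologically irreducible. -/
theorem unitary_irreducible_iff_hecke_irreducible {G : Type*} [Group G]
    [TopologicalSpace G] [IsTopologicalGroup G] [LocallyCompactSpace G]
    [TotallyDisconnectedSpace G]
    (π : UnitaryRep G) (hnt : ∃ v : π.carrier, v ≠ 0) :
    (∀ W : Submodule ℂ π.carrier, IsClosed (W : Set π.carrier) →
      (∀ g : G, ∀ v ∈ W, π.ρ g v ∈ W) → W = ⊥ ∨ W = ⊤) ↔
    (∀ K : Subgroup G, IsOpen (K : Set G) → IsCompact (K : Set G) →
      fixedSubU π K ≠ ⊥ →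
      ∀ W : Submodule ℂ π.carrier, W ≤ fixedSubU π K →
        IsClosed (W : Set π.carrier) →
        (∀ f ∈ heckeSet K, ∀ v ∈ W, heckeActU π K f v ∈ W) →
        W = ⊥ ∨ W = fixedSubU π K) := by
  haveI : T2Space G := t2_of_tdisc
  constructor
  · -- forward direction
    intro hirr K hKo hKc hKfix W hWle hWcl hWhecke
    rcases eq_or_ne W ⊥ with hbot | hWne
    · exact Or.inl hbot
    right
    haveI := fixed_hasOrtho π K
    obtain ⟨w₀, hw₀W, hw₀⟩ := Submodule.exists_mem_ne_zero_of_ne_bot hWne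
    -- the closed G-invariant subspace generated by W
    set S : Set π.carrier := ⋃ g : G, π.ρ g '' (W : Set π.carrier) with hS
    set V : Submodule ℂ π.carrier := (Submodule.span ℂ S).topologicalClosure with hV
    have hmapS : ∀ g : G, π.ρ g '' S ⊆ S := by
      rintro g _ ⟨x, hx, rfl⟩
      obtain ⟨_, ⟨h, rfl⟩, y, hy, rfl⟩ := hx
      refine Set.mem_iUnion.mpr ⟨g * h, ⟨y, hy, ?_⟩⟩
      rw [π.map_mul']
    have hspanS : ∀ g : G, ∀ x ∈ Submodule.span ℂ S, π.ρ g x ∈ Submodule.span ℂ S := by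
      intro g x hx
      have hmem : π.ρ g x ∈ Submodule.map ((π.ρ g).toLinearEquiv.toLinearMap)
          (Submodule.span ℂ S) := ⟨x, hx, rfl⟩
      rw [Submodule.map_span] at hmem
      exact Submodule.span_mono (hmapS g) hmem
    have hVinv : ∀ g : G, ∀ x ∈ V, π.ρ g x ∈ V := by
      intro g x hx
      have h1 : π.ρ g x ∈ closure (π.ρ g '' (Submodule.span ℂ S : Set π.carrier)) :=
        image_closure_subset_closure_image (π.ρ g).continuous ⟨x, hx, rfl⟩
      have h2 : π.ρ g '' (Submodule.span ℂ S : Set π.carrier)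
          ⊆ (Submodule.span ℂ S : Set π.carrier) := by
        rintro _ ⟨y, hy, rfl⟩
        exact hspanS g y hy
      exact closure_mono h2 h1
    have hVne : V ≠ ⊥ := by
      intro hVbot
      apply hw₀
      have : w₀ ∈ S := Set.mem_iUnion.mpr ⟨1, ⟨w₀, hw₀W, π.map_one' w₀⟩⟩
      have : w₀ ∈ V := (Submodule.span ℂ S).le_topologicalClosure (Submodule.subset_span this)
      rwa [hVbot, Submodule.mem_bot] at this
    have hVtop : V = ⊤ := by
      rcases hirr V (Submodule.isClosed_topologicalClosure _) hVinv with h | h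
      · exact absurd h hVne
      · exact h
    -- now show fixedSubU ≤ W
    refine le_antisymm hWle ?_
    intro u hu
    set P : π.carrier →L[ℂ] π.carrier :=
      (fixedSubU π K).subtypeL.comp (Submodule.orthogonalProjection (fixedSubU π K)) with hP
    have hPu : P u = u := by
      show ((Submodule.orthogonalProjection (fixedSubU π K) u : (fixedSubU π K)) : π.carrier) = u
      exact Submodule.starProjection_eq_self_iff.mpr hu
    have hPS : ∀ x ∈ Submodule.span ℂ S, P x ∈ W := by
      intro x hx
      have hmem : P x ∈ Submodule.map (P : π.carrier →ₗ[ℂ] π.carrier)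
          (Submodule.span ℂ S) := ⟨x, hx, rfl⟩
      rw [Submodule.map_span] at hmem
      have hPSW : (P : π.carrier →ₗ[ℂ] π.carrier) '' S ⊆ (W : Set π.carrier) := by
        rintro _ ⟨x', hx', rfl⟩
        obtain ⟨_, ⟨g, rfl⟩, w, hw, rfl⟩ := hx'
        obtain ⟨n, hn, m, hmfix, hsm, hperp⟩ := heckeActU_indK hKo hKc (hWle hw) g
        have hn0 : ((n : ℂ)) ≠ 0 := Nat.cast_ne_zero.mpr hn.ne'
        have hPm : (P : π.carrier →ₗ[ℂ] π.carrier) (π.ρ g w) = m := by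
          show ((Submodule.orthogonalProjection (fixedSubU π K) (π.ρ g w) : (fixedSubU π K))
            : π.carrier) = m
          exact Submodule.eq_starProjection_of_mem_of_inner_eq_zero hmfix hperp
        rw [hPm]
        have hmval : m = ((n : ℂ))⁻¹ • heckeActU π K (indK K g) w := by
          rw [hsm, smul_smul, inv_mul_cancel₀ hn0, one_smul]
        rw [hmval]
        exact W.smul_mem _ (hWhecke _ (indK_mem_heckeSet hKc g) w hw)
      exact Submodule.span_le.mpr hPSW hmem
    have huW : u ∈ closure (W : Set π.carrier) := by
      rw [← hPu]
      have huV : u ∈ closure ((Submodule.span ℂ S : Submodule ℂ π.carrier)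
          : Set π.carrier) := by
        have : u ∈ V := hVtop ▸ Submodule.mem_top
        exact this
      have h1 : P u ∈ closure (P '' ((Submodule.span ℂ S : Submodule ℂ π.carrier)
          : Set π.carrier)) :=
        image_closure_subset_closure_image P.continuous ⟨u, huV, rfl⟩
      refine closure_mono ?_ h1
      rintro _ ⟨x, hx, rfl⟩
      exact hPS x hx
    rwa [hWcl.closure_eq] at huW
  · -- converse direction
    intro hH W hWcl hWinv
    rcases eq_or_ne W ⊥ with hbot | hWne
    · exact Or.inl hbot
    right
    by_contra hWtop
    obtain ⟨v, hvW, hv0⟩ := Submodule.exists_mem_ne_zero_of_ne_bot hWne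
    haveI := hWcl.completeSpace_coe
    have hWorth_ne : Wᗮ ≠ ⊥ := fun h => hWtop (Submodule.orthogonal_eq_bot_iff.mp h)
    obtain ⟨u, huW, hu0⟩ := Submodule.exists_mem_ne_zero_of_ne_bot hWorth_ne
    -- orthogonal complement is invariant
    have horth_inv : ∀ g : G, ∀ x ∈ Wᗮ, π.ρ g x ∈ Wᗮ := by
      intro g x hx
      rw [Submodule.mem_orthogonal] at hx ⊢
      intro w hw
      have h1 := (π.ρ g).inner_map_map (π.ρ g⁻¹ w) x
      rw [rho_rho_inv g w] at h1
      rw [h1]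
      exact hx _ (hWinv g⁻¹ w hw)
    -- choose a compact open subgroup
    set Uv : Set G := {g : G | ‖π.ρ g v - v‖ < ‖v‖ / 2} with hUv
    set Uu : Set G := {g : G | ‖π.ρ g u - u‖ < ‖u‖ / 2} with hUu
    have hUvo : IsOpen Uv :=
      isOpen_lt (((π.continuous_orbit v).sub continuous_const).norm) continuous_const
    have hUuo : IsOpen Uu :=
      isOpen_lt (((π.continuous_orbit u).sub continuous_const).norm) continuous_const
    have h1v : (1 : G) ∈ Uv := by
      show ‖π.ρ 1 v - v‖ < ‖v‖ / 2
      rw [π.map_one', sub_self, norm_zero]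
      exact half_pos (norm_pos_iff.mpr hv0)
    have h1u : (1 : G) ∈ Uu := by
      show ‖π.ρ 1 u - u‖ < ‖u‖ / 2
      rw [π.map_one', sub_self, norm_zero]
      exact half_pos (norm_pos_iff.mpr hu0)
    obtain ⟨K, hKo, hKc, hKsub⟩ :=
      exists_compact_open_subgroup (hUvo.inter hUuo) ⟨h1v, h1u⟩
    obtain ⟨mv, hmvfix, hmv0, hmvW⟩ := exists_fixed_vector hv0
      (fun k hk => ((hKsub hk).1 : ‖π.ρ k v - v‖ < ‖v‖ / 2).le)
    obtain ⟨mu, hmufix, hmu0, hmuW⟩ := exists_fixed_vector hu0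
      (fun k hk => ((hKsub hk).2 : ‖π.ρ k u - u‖ < ‖u‖ / 2).le)
    have hmvW' : mv ∈ W := hmvW W hWcl hWinv hvW
    have hmuW' : mu ∈ Wᗮ := hmuW Wᗮ W.isClosed_orthogonal horth_inv huW
    have hfixne : fixedSubU π K ≠ ⊥ := by
      intro h
      apply hmv0
      have := hmvfix
      rw [h, Submodule.mem_bot] at this
      exact this
    have hinter_cl : IsClosed ((W ⊓ fixedSubU π K : Submodule ℂ π.carrier)
        : Set π.carrier) := by
      rw [Submodule.coe_inf]
      exact hWcl.inter (fixed_isClosed π K)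
    have hhecke : ∀ f ∈ heckeSet K, ∀ x ∈ W ⊓ fixedSubU π K,
        heckeActU π K f x ∈ W ⊓ fixedSubU π K := by
      intro f hf x hx
      rw [Submodule.mem_inf] at hx ⊢
      exact ⟨heckeActU_mem_of_invariant hKo hWinv hf.1 hx.1,
        heckeActU_mem_fixed hKo hf hx.2⟩
    rcases hH K hKo hKc hfixne (W ⊓ fixedSubU π K) inf_le_right hinter_cl hhecke with
      h | h
    · apply hmv0
      have : mv ∈ W ⊓ fixedSubU π K := Submodule.mem_inf.mpr ⟨hmvW', hmvfix⟩
      rwa [h, Submodule.mem_bot] at this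
    · apply hmu0
      have hmuWmem : mu ∈ W := by
        have : mu ∈ W ⊓ fixedSubU π K := by rw [h]; exact hmufix
        exact (Submodule.mem_inf.mp this).1
      have := (Submodule.mem_orthogonal W mu).mp hmuW' mu hmuWmem
      exact inner_self_eq_zero.mp this
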